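/- Let G be a connected graph, let a ∈ ℝ^L have all components strictly positive with Γ·a = c·𝟙 for some c > 0, and set N = κ + c. Define P(a) = (1/c)·Γ·d(a), where d(a) is the diagonal matrix with diagonal a. Then: (1) P(a) is a row-stochastic matrix (nonnegative entries, each row summing to 1); (2) all eigenvalues of P(a) are real and lie in [−1, 1], and 1 is an eigenvalue; (3) the spectrum of the matrix J = (1/N²)·d(a)·Γ·( c·I − d(a)·Γ ) is { (c²/N²)·β·(1−β) : β an eigenvalue of P(a) }; consequently all eigenvalues of J are real and they are all ≤ 0 if and only if every eigenvalue β of P(a) with β ≠ 1 satisfies β ≤ 0. -/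

import Mathlib

open Finset Filter

/-- `auxN G κ a i = κ + ∑_{j ~ i} a_j`. -/
noncomputable def auxN {L : ℕ} (G : SimpleGraph (Fin L)) [DecidableRel G.Adj] (κ : ℝ)
    (a : Fin L → ℝ) (i : Fin L) : ℝ :=
  κ + ∑ j ∈ G.neighborFinset i, a j

/-- The auxin transport vector field
`f_i(a) = D·∑_{k ~ i}(a_k − a_i) + T·∑_{k ~ i}(a_k·a_i/N_k(a) − a_i·a_k/N_i(a))`. -/
noncomputable def auxF {L : ℕ} (G : SimpleGraph (Fin L)) [DecidableRel G.Adj] (κ D T : ℝ)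
    (a : Fin L → ℝ) (i : Fin L) : ℝ :=
  D * ∑ k ∈ G.neighborFinset i, (a k - a i) +
    T * ∑ k ∈ G.neighborFinset i,
      (a k * a i / auxN G κ a k - a i * a k / auxN G κ a i)

/-- Eigenvalue–eigenvector characterization of the spectrum of a complex matrix. -/
lemma aux_mem_spectrum_iff {n : ℕ} (M : Matrix (Fin n) (Fin n) ℂ) (μ : ℂ) :
    μ ∈ spectrum ℂ M ↔ ∃ v ≠ 0, M.mulVec v = μ • v := by
  rw [spectrum.mem_iff, Matrix.isUnit_iff_isUnit_det, isUnit_iff_ne_zero, not_ne_iff,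
    ← Matrix.exists_mulVec_eq_zero_iff]
  refine exists_congr fun v => and_congr_right fun _ => ?_
  rw [Algebra.algebraMap_eq_smul_one, Matrix.sub_mulVec, Matrix.smul_mulVec,
    Matrix.one_mulVec, sub_eq_zero]
  exact eq_comm

open Matrix in
/-- The spectrum of a matrix is invariant under transposition. -/
lemma aux_spectrum_transpose {n : ℕ} (M : Matrix (Fin n) (Fin n) ℂ) :
    spectrum ℂ Mᵀ = spectrum ℂ M := by
  ext μ
  rw [spectrum.mem_iff, spectrum.mem_iff, Matrix.isUnit_iff_isUnit_det,
    Matrix.isUnit_iff_isUnit_det]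
  have : algebraMap ℂ (Matrix (Fin n) (Fin n) ℂ) μ - Mᵀ
      = (algebraMap ℂ (Matrix (Fin n) (Fin n) ℂ) μ - M)ᵀ := by
    rw [Matrix.transpose_sub, Algebra.algebraMap_eq_smul_one, Matrix.transpose_smul,
      Matrix.transpose_one]
  rw [this, Matrix.det_transpose]

/-- Every element of the spectrum of a Hermitian complex matrix is real. -/
lemma aux_hermitian_real {n : ℕ} {M : Matrix (Fin n) (Fin n) ℂ} (hM : M.IsHermitian)
    {μ : ℂ} (hμ : μ ∈ spectrum ℂ M) : μ = μ.re := by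
  obtain ⟨v, hv, hvec⟩ := (aux_mem_spectrum_iff M μ).mp hμ
  have hstar : ∀ i j, (starRingEnd ℂ) (M i j) = M j i := by
    intro i j
    have := congrFun (congrFun hM j) i
    simpa [Matrix.conjTranspose_apply] using this
  set s : ℂ := ∑ i, ∑ j, (starRingEnd ℂ) (v i) * M i j * v j with hs
  set t : ℝ := ∑ i, Complex.normSq (v i) with ht
  have htpos : 0 < t := by
    obtain ⟨i, hi⟩ : ∃ i, v i ≠ 0 := by
      by_contra h; push_neg at h; exact hv (funext h)
    exact Finset.sum_pos' (fun j _ => Complex.normSq_nonneg _)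
      ⟨i, Finset.mem_univ i, Complex.normSq_pos.mpr hi⟩
  have hst : s = μ * t := by
    have h1 : ∀ i, ∑ j, M i j * v j = μ * v i := by
      intro i
      have := congrFun hvec i
      simpa [Matrix.mulVec, dotProduct] using this
    calc s = ∑ i, (starRingEnd ℂ) (v i) * (μ * v i) := by
            refine Finset.sum_congr rfl fun i _ => ?_
            rw [← h1 i, Finset.mul_sum]
            exact Finset.sum_congr rfl fun j _ => by ring
      _ = μ * t := by
            rw [ht]
            push_cast
            rw [Finset.mul_sum]
            refine Finset.sum_congr rfl fun i _ => ?_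
            rw [← Complex.mul_conj]
            ring
  have hss : (starRingEnd ℂ) s = s := by
    calc (starRingEnd ℂ) s = ∑ i, ∑ j, (starRingEnd ℂ) (v j) * M j i * v i := by
          rw [hs, map_sum]
          refine Finset.sum_congr rfl fun i _ => ?_
          rw [map_sum]
          refine Finset.sum_congr rfl fun j _ => ?_
          simp only [map_mul, Complex.conj_conj, hstar]
          ring
      _ = s := by rw [hs, Finset.sum_comm]
  have hμc : (starRingEnd ℂ) μ = μ := by
    have h2 : (starRingEnd ℂ) (μ * t) = μ * t := by rw [← hst, hss, hst]
    rw [map_mul, Complex.conj_ofReal] at h2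
    have htne : ((t : ℝ) : ℂ) ≠ 0 := by exact_mod_cast htpos.ne'
    exact mul_right_cancel₀ htne h2
  exact ((Complex.conj_eq_iff_re).mp hμc).symm

open Matrix Polynomial in
/-- Spectral description of the Jacobian at a positive critical point with
`Γ·a = c·𝟙`, `N = κ + c`. The matrix `P(a) = (1/c)·Γ·d(a)` is row-stochastic, its
eigenvalues are real and lie in `[−1,1]` with `1` an eigenvalue, and the spectrum of the
Jacobian `J = (1/N²)·d(a)·Γ·(c·I − d(a)·Γ)` is `{(c²/N²)·β·(1−β) : β ∈ spec P(a)}`;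
consequently the eigenvalues of `J` are real, and all are `≤ 0` iff every eigenvalue
`β ≠ 1` of `P(a)` satisfies `β ≤ 0`. -/
theorem auxin_jacobian_spectrum {L : ℕ} (hL : 1 ≤ L) (G : SimpleGraph (Fin L))
    [DecidableRel G.Adj] (hG : G.Connected) (κ : ℝ) (hκ : 0 < κ)
    (a : Fin L → ℝ) (ha : ∀ i, 0 < a i)
    (c : ℝ) (hc : 0 < c) (hca : (G.adjMatrix ℝ).mulVec a = fun _ => c)
    (N : ℝ) (hN : N = κ + c)
    (P J : Matrix (Fin L) (Fin L) ℝ)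
    (hP : P = (1 / c) • (G.adjMatrix ℝ * Matrix.diagonal a))
    (hJ : J = (1 / N ^ 2) •
      (Matrix.diagonal a * G.adjMatrix ℝ *
        (c • (1 : Matrix (Fin L) (Fin L) ℝ) - Matrix.diagonal a * G.adjMatrix ℝ))) :
    (∀ i j, 0 ≤ P i j) ∧ (∀ i, ∑ j, P i j = 1) ∧
    (∀ μ ∈ spectrum ℂ (P.map Complex.ofReal), ∃ β : ℝ, μ = (β : ℂ) ∧ -1 ≤ β ∧ β ≤ 1) ∧
    ((1 : ℂ) ∈ spectrum ℂ (P.map Complex.ofReal)) ∧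
    (spectrum ℂ (J.map Complex.ofReal) =
      (fun μ : ℂ => ((c ^ 2 / N ^ 2 : ℝ) : ℂ) * μ * (1 - μ)) ''
        spectrum ℂ (P.map Complex.ofReal)) ∧
    (∀ μ ∈ spectrum ℂ (J.map Complex.ofReal), ∃ r : ℝ, μ = (r : ℂ)) ∧
    ((∀ μ ∈ spectrum ℂ (J.map Complex.ofReal), μ.re ≤ 0) ↔
      (∀ β ∈ spectrum ℂ (P.map Complex.ofReal), β ≠ 1 → β.re ≤ 0)) := by
  have hc0 : c ≠ 0 := ne_of_gt hc
  have hNpos : 0 < N := by rw [hN]; linarith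
  have hN0 : N ≠ 0 := ne_of_gt hNpos
  have hne : Nonempty (Fin L) := ⟨⟨0, by omega⟩⟩
  set Γ : Matrix (Fin L) (Fin L) ℝ := G.adjMatrix ℝ with hΓ
  have hΓnn : ∀ i j, 0 ≤ Γ i j := by
    intro i j; by_cases h : G.Adj i j <;> simp [hΓ, SimpleGraph.adjMatrix_apply, h]
  have hΓsym : ∀ i j, Γ i j = Γ j i := by
    intro i j; simp [hΓ, SimpleGraph.adjMatrix_apply, G.adj_comm]
  have hPent : ∀ i j, P i j = (1 / c) * (Γ i j * a j) := by
    intro i j; rw [hP]; simp [Matrix.mul_diagonal]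
  have part1 : ∀ i j, 0 ≤ P i j := by
    intro i j; rw [hPent]
    have h1 := hΓnn i j
    have h2 := (ha j).le
    positivity
  have part2 : ∀ i, ∑ j, P i j = 1 := by
    intro i
    have h := congrFun hca i
    simp only [Matrix.mulVec, dotProduct] at h
    calc ∑ j, P i j = (1 / c) * ∑ j, Γ i j * a j := by
          rw [Finset.mul_sum]; exact Finset.sum_congr rfl fun j _ => hPent i j
      _ = 1 := by rw [h]; field_simp
  set Pc : Matrix (Fin L) (Fin L) ℂ := P.map Complex.ofReal with hPc
  have hPcent : ∀ i j, Pc i j = ((P i j : ℝ) : ℂ) := fun i j => rfl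
  -- spectral radius bound
  have key_bound : ∀ μ ∈ spectrum ℂ Pc, ‖μ‖ ≤ 1 := by
    intro μ hμ
    obtain ⟨v, hv, hvec⟩ := (aux_mem_spectrum_iff Pc μ).mp hμ
    obtain ⟨i₀, -, hi₀⟩ := Finset.exists_max_image Finset.univ (fun j => ‖v j‖)
      Finset.univ_nonempty
    have hvpos : 0 < ‖v i₀‖ := by
      rcases (norm_nonneg (v i₀)).lt_or_eq with h | h
      · exact h
      · exfalso; apply hv; funext j
        have h1 := hi₀ j (Finset.mem_univ j)
        rw [← h] at h1
        exact norm_eq_zero.mp (le_antisymm h1 (norm_nonneg _))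
    have h1 : ∑ j, Pc i₀ j * v j = μ * v i₀ := by
      have := congrFun hvec i₀
      simpa [Matrix.mulVec, dotProduct] using this
    have h2 : ‖μ * v i₀‖ ≤ ‖v i₀‖ := by
      rw [← h1]
      calc ‖∑ j, Pc i₀ j * v j‖ ≤ ∑ j, ‖Pc i₀ j * v j‖ :=
            norm_sum_le _ _
        _ = ∑ j, P i₀ j * ‖v j‖ := by
            refine Finset.sum_congr rfl fun j _ => ?_
            rw [norm_mul, hPcent, Complex.norm_real, Real.norm_eq_abs, abs_of_nonneg (part1 i₀ j)]
        _ ≤ ∑ j, P i₀ j * ‖v i₀‖ :=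
            Finset.sum_le_sum fun j _ =>
              mul_le_mul_of_nonneg_left (hi₀ j (Finset.mem_univ j)) (part1 i₀ j)
        _ = ‖v i₀‖ := by rw [← Finset.sum_mul, part2 i₀, one_mul]
    rw [norm_mul] at h2
    have h3 : ‖μ‖ * ‖v i₀‖ ≤ 1 * ‖v i₀‖ := by
      rw [one_mul]; exact h2
    exact le_of_mul_le_mul_right h3 hvpos
  -- realness via similarity to a Hermitian matrix
  set b : Fin L → ℝ := fun i => Real.sqrt (a i) with hbdef
  have hbpos : ∀ i, 0 < b i := fun i => Real.sqrt_pos.mpr (ha i)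
  have hbsq : ∀ i, b i * b i = a i := fun i => Real.mul_self_sqrt (ha i).le
  have hbne : ∀ i, ((b i : ℝ) : ℂ) ≠ 0 := fun i => by exact_mod_cast (hbpos i).ne'
  set E : Matrix (Fin L) (Fin L) ℂ := Matrix.diagonal fun i => ((b i : ℝ) : ℂ) with hE
  set E' : Matrix (Fin L) (Fin L) ℂ := Matrix.diagonal fun i => (((b i : ℝ) : ℂ))⁻¹ with hE'
  have hEE' : E * E' = 1 := by
    rw [hE, hE', Matrix.diagonal_mul_diagonal]
    have h : (fun i => ((b i : ℝ) : ℂ) * (((b i : ℝ) : ℂ))⁻¹) = fun _ => (1 : ℂ) :=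
      funext fun i => mul_inv_cancel₀ (hbne i)
    rw [h, Matrix.diagonal_one]
  have hE'E : E' * E = 1 := by
    rw [hE, hE', Matrix.diagonal_mul_diagonal]
    have h : (fun i => (((b i : ℝ) : ℂ))⁻¹ * ((b i : ℝ) : ℂ)) = fun _ => (1 : ℂ) :=
      funext fun i => inv_mul_cancel₀ (hbne i)
    rw [h, Matrix.diagonal_one]
  set S : Matrix (Fin L) (Fin L) ℂ := E * Pc * E' with hS
  have hspecS : spectrum ℂ S = spectrum ℂ Pc := by
    have h := spectrum.units_conjugate (R := ℂ) (a := Pc) (u := ⟨E, E', hEE', hE'E⟩)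
    exact h
  have hSent : ∀ i j, S i j = (((b i * P i j * (b j)⁻¹ : ℝ)) : ℂ) := by
    intro i j
    rw [hS, hE, hE', Matrix.mul_diagonal, Matrix.diagonal_mul, hPcent]
    push_cast
    ring
  have hSherm : S.IsHermitian := by
    have h : Sᴴ = S := by
      ext i j
      rw [Matrix.conjTranspose_apply, hSent, hSent, Complex.star_def, Complex.conj_ofReal,
        Complex.ofReal_inj]
      rw [hPent, hPent, hΓsym j i, ← hbsq i, ← hbsq j]
      field_simp [(hbpos i).ne', (hbpos j).ne']
    exact h
  have hreal : ∀ μ ∈ spectrum ℂ Pc, μ = (μ.re : ℂ) := by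
    intro μ hμ
    exact aux_hermitian_real hSherm (hspecS ▸ hμ)
  have part3 : ∀ μ ∈ spectrum ℂ Pc, ∃ β : ℝ, μ = (β : ℂ) ∧ -1 ≤ β ∧ β ≤ 1 := by
    intro μ hμ
    have h1 := key_bound μ hμ
    rw [hreal μ hμ, Complex.norm_real, Real.norm_eq_abs] at h1
    obtain ⟨hl, hr⟩ := abs_le.mp h1
    exact ⟨μ.re, hreal μ hμ, hl, hr⟩
  have part4 : (1 : ℂ) ∈ spectrum ℂ Pc := by
    refine (aux_mem_spectrum_iff Pc 1).mpr ⟨fun _ => 1, ?_, ?_⟩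
    · intro h
      exact one_ne_zero (congrFun h ⟨0, by omega⟩)
    · funext i
      have h0 : ((∑ j, P i j : ℝ) : ℂ) = 1 := by rw [part2 i]; norm_num
      push_cast at h0
      simp only [Matrix.mulVec, dotProduct, mul_one, Pi.smul_apply, smul_eq_mul]
      simpa [hPc, Matrix.map_apply] using h0
  -- the Jacobian
  set k : ℝ := c ^ 2 / N ^ 2 with hk
  have hkpos : 0 < k := by rw [hk]; positivity
  have hΓT : Γᵀ = Γ := by rw [hΓ]; exact SimpleGraph.transpose_adjMatrix G
  have hPT : c • Pᵀ = Matrix.diagonal a * Γ := by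
    rw [hP, Matrix.transpose_smul, Matrix.transpose_mul, Matrix.diagonal_transpose, hΓT,
      smul_smul, mul_one_div_cancel hc0, one_smul]
  have hJ2 : J = k • (Pᵀ * (1 - Pᵀ)) := by
    rw [hJ, ← hPT, ← smul_sub, smul_mul_assoc, mul_smul_comm, smul_smul, smul_smul]
    congr 1
    rw [hk]
    ring
  set Q : Matrix (Fin L) (Fin L) ℂ := Pcᵀ with hQ
  have hspecQ : spectrum ℂ Q = spectrum ℂ Pc := aux_spectrum_transpose Pc
  have hmul : ∀ (A B : Matrix (Fin L) (Fin L) ℝ),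
      (A * B).map Complex.ofReal = A.map Complex.ofReal * B.map Complex.ofReal := by
    intro A B; ext i j
    simp [Matrix.map_apply, Matrix.mul_apply]
  have hsub : ∀ (A : Matrix (Fin L) (Fin L) ℝ),
      ((1 : Matrix (Fin L) (Fin L) ℝ) - A).map Complex.ofReal
        = 1 - A.map Complex.ofReal := by
    intro A; ext i j
    simp [Matrix.map_apply, Matrix.sub_apply, Matrix.one_apply, apply_ite Complex.ofReal]
  have hmaps : ∀ (r : ℝ) (A : Matrix (Fin L) (Fin L) ℝ),
      (r • A).map Complex.ofReal = ((r : ℝ) : ℂ) • A.map Complex.ofReal := by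
    intro r A; ext i j
    simp [Matrix.map_apply]
  have hJcQ : J.map Complex.ofReal = ((k : ℝ) : ℂ) • (Q * (1 - Q)) := by
    rw [hJ2, hmaps, hmul, hsub, Matrix.transpose_map, hQ, hPc]
  set q : Polynomial ℂ := Polynomial.C ((k : ℝ) : ℂ) * (Polynomial.X * (1 - Polynomial.X))
    with hq
  have haev : Polynomial.aeval Q q = ((k : ℝ) : ℂ) • (Q * (1 - Q)) := by
    rw [hq]
    simp only [_root_.map_mul, _root_.map_sub, _root_.map_one, Polynomial.aeval_X, Polynomial.aeval_C]
    rw [Algebra.smul_def]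
  have hkC : ((k : ℝ) : ℂ) ≠ 0 := by exact_mod_cast hkpos.ne'
  have hdeg : 0 < q.degree := by
    rw [hq, Polynomial.degree_C_mul hkC, Polynomial.degree_mul, Polynomial.degree_X]
    have h1 : (1 - Polynomial.X : Polynomial ℂ) = -(Polynomial.X - Polynomial.C 1) := by
      rw [Polynomial.C_1]; ring
    rw [h1, Polynomial.degree_neg, Polynomial.degree_X_sub_C]
    decide
  have part5 : spectrum ℂ (J.map Complex.ofReal) =
      (fun μ : ℂ => ((k : ℝ) : ℂ) * μ * (1 - μ)) '' spectrum ℂ Pc := by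
    have hfun : (fun z : ℂ => Polynomial.eval z q)
        = fun μ : ℂ => ((k : ℝ) : ℂ) * μ * (1 - μ) := by
      funext z
      rw [hq]
      simp only [Polynomial.eval_mul, Polynomial.eval_C, Polynomial.eval_X,
        Polynomial.eval_sub, Polynomial.eval_one]
      ring
    rw [hJcQ, ← haev, spectrum.map_polynomial_aeval_of_degree_pos Q q hdeg, hspecQ, hfun]
  have part6 : ∀ μ ∈ spectrum ℂ (J.map Complex.ofReal), ∃ r : ℝ, μ = (r : ℂ) := by
    intro μ hμ
    rw [part5] at hμ
    obtain ⟨z, hz, rfl⟩ := hμ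
    obtain ⟨β, rfl, -, -⟩ := part3 z hz
    exact ⟨k * β * (1 - β), by push_cast; ring⟩
  refine ⟨part1, part2, part3, part4, part5, part6, ?_⟩
  have hre : ∀ bb : ℝ, (((k : ℝ) : ℂ) * (bb : ℂ) * (1 - (bb : ℂ))).re = k * bb * (1 - bb) := by
    intro bb
    have h : ((k : ℝ) : ℂ) * (bb : ℂ) * (1 - (bb : ℂ)) = ((k * bb * (1 - bb) : ℝ) : ℂ) := by
      push_cast; ring
    rw [h, Complex.ofReal_re]
  constructor
  · intro h β hβ hβ1
    obtain ⟨bb, hbb, hb1, hb2⟩ := part3 β hβ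
    have hmem : ((k : ℝ) : ℂ) * β * (1 - β) ∈ spectrum ℂ (J.map Complex.ofReal) := by
      rw [part5]; exact ⟨β, hβ, rfl⟩
    have h0 := h _ hmem
    rw [hbb, hre bb] at h0
    have hbne1 : bb ≠ 1 := by
      intro hx; apply hβ1; rw [hbb, hx]; norm_num
    have hlt : bb < 1 := lt_of_le_of_ne hb2 hbne1
    have hfin : bb ≤ 0 := by nlinarith [mul_pos hkpos (sub_pos.mpr hlt)]
    rw [hbb]
    simpa using hfin
  · intro h μ hμ
    rw [part5] at hμ
    obtain ⟨z, hz, rfl⟩ := hμ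
    obtain ⟨bb, rfl, hb1, hb2⟩ := part3 z hz
    rw [hre bb]
    by_cases hbb1 : bb = 1
    · rw [hbb1]; simp
    · have hb0 : ((bb : ℝ) : ℂ).re ≤ 0 := h _ hz (by simpa using hbb1)
      rw [Complex.ofReal_re] at hb0
      nlinarith [mul_pos hkpos (by linarith : (0:ℝ) < 1 - bb)]
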